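/- Fix n ≥ 1 and a constant k with k ≥ 1/n, and for an n-simplex σ define f_n(σ) = max over vertices v of σ of |h(v, σ)/R(σ) − k|, where h(v, σ) is the signed distance from the circumcenter of σ to the hyperplane of the facet opposite v and R(σ) is the circumradius. Then for every n-simplex σ in a Euclidean space, f_n(σ) ≥ k − 1/n; that is, the value k − 1/n attained by a regular n-simplex is a lower bound of f_n over all n-simplices. -/

import Mathlib

open EuclideanGeometry RealInnerProductSpace

variable {E : Type*} [NormedAddCommGroup E] [InnerProductSpace ℝ E] [FiniteDimensional ℝ E]

/-- The facet of an `(n+1)`-simplex opposite vertex `i`. -/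
noncomputable def Affine.Simplex.facetOpp {n : ℕ} (σ : Affine.Simplex ℝ E (n + 1))
    (i : Fin (n + 2)) : Affine.Simplex ℝ E n :=
  σ.face (fs := {i}ᶜ)
    (by rw [Finset.card_compl, Finset.card_singleton, Fintype.card_fin]; rfl)

/-- A simplex is well-centered if its circumcenter is a positive affine
combination of its vertices, i.e. lies in the interior of the simplex. -/
def Affine.Simplex.WellCentered {n : ℕ} (σ : Affine.Simplex ℝ E n) : Prop :=
  ∃ w : Fin (n + 1) → ℝ, (∀ j, 0 < w j) ∧ (∑ j, w j = 1) ∧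
    σ.circumcenter = Finset.univ.affineCombination ℝ σ.points w

/-- The signed distance from the circumcenter of `σ` to the hyperplane spanned by the
facet opposite vertex `i`, positive when the circumcenter is on the same side as vertex `i`. -/
noncomputable def Affine.Simplex.signedDist {n : ℕ} (σ : Affine.Simplex ℝ E (n + 1))
    (i : Fin (n + 2)) : ℝ :=
  ⟪σ.circumcenter - ((σ.facetOpp i).circumcenter : E),
      σ.points i - (((σ.facetOpp i).orthogonalProjectionSpan (σ.points i) : E))⟫ /
    ‖σ.points i - (((σ.facetOpp i).orthogonalProjectionSpan (σ.points i) : E))‖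

lemma aux {n : ℕ} (σ : Affine.Simplex ℝ E (n + 1)) (i : Fin (n + 2))
    (w : Fin (n + 2) → ℝ) (hw : ∑ j, w j = 1)
    (hc : σ.circumcenter = Finset.univ.affineCombination ℝ σ.points w) :
    σ.signedDist i =
      w i * ‖σ.points i - (((σ.facetOpp i).orthogonalProjectionSpan (σ.points i) : E))‖ ∧
    ‖σ.points i - (((σ.facetOpp i).orthogonalProjectionSpan (σ.points i) : E))‖ ≤
      σ.circumradius + σ.signedDist i ∧
    0 < ‖σ.points i - (((σ.facetOpp i).orthogonalProjectionSpan (σ.points i) : E))‖ := by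
  set F := σ.facetOpp i with hF
  set sp := affineSpan ℝ (Set.range F.points) with hsp
  set q : E := ((F.orthogonalProjectionSpan (σ.points i) : E)) with hq
  set u : E := σ.points i - q with hu
  set cF : E := F.circumcenter with hcF
  -- u is orthogonal to the direction of sp
  have hu_orth : u ∈ sp.directionᗮ := by
    have := vsub_orthogonalProjection_mem_direction_orthogonal sp (σ.points i)
    simpa [hu, hq, vsub_eq_sub, Affine.Simplex.orthogonalProjectionSpan] using this
  have hinner0 : ∀ v v' : E, v ∈ sp → v' ∈ sp → ⟪v - v', u⟫ = 0 := by
    intro v v' hv hv'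
    have hd : v - v' ∈ sp.direction := by
      simpa [vsub_eq_sub] using AffineSubspace.vsub_mem_direction hv hv'
    exact Submodule.inner_right_of_mem_orthogonal hd hu_orth
  have hq_mem : q ∈ sp := (F.orthogonalProjectionSpan (σ.points i)).2
  have hcF_mem : cF ∈ sp := F.circumcenter_mem_affineSpan
  -- u ≠ 0
  have hu_ne : u ≠ 0 := by
    intro h0
    have : σ.points i ∈ sp := by
      have : σ.points i = q := by rwa [hu, sub_eq_zero] at h0
      rw [this]; exact hq_mem
    have hrange := σ.range_face_points (fs := {i}ᶜ)
      (by rw [Finset.card_compl, Finset.card_singleton, Fintype.card_fin]; rfl)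
    rw [hsp, hF, Affine.Simplex.facetOpp, hrange] at this
    have hset : (↑({i}ᶜ : Finset (Fin (n+2))) : Set (Fin (n+2))) = Set.univ \ {i} := by
      ext j; simp
    rw [hset] at this
    exact σ.independent.notMem_affineSpan_sdiff i Set.univ this
  have hu_pos : 0 < ‖u‖ := norm_pos_iff.mpr hu_ne
  -- points of the facet
  have hpt_mem : ∀ j : Fin (n + 2), j ≠ i → σ.points j ∈ sp := by
    intro j hj
    have hrange := σ.range_face_points (fs := {i}ᶜ)
      (by rw [Finset.card_compl, Finset.card_singleton, Fintype.card_fin]; rfl)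
    rw [hsp, hF, Affine.Simplex.facetOpp, hrange]
    exact mem_affineSpan ℝ (Set.mem_image_of_mem _ (by simp [hj]))
  -- ⟪points i - cF, u⟫ = ‖u‖^2
  have hkey : ⟪σ.points i - cF, u⟫ = ‖u‖ ^ 2 := by
    have : σ.points i - cF = u + (q - cF) := by rw [hu]; abel
    rw [this, inner_add_left, hinner0 q cF hq_mem hcF_mem, real_inner_self_eq_norm_sq]
    ring
  -- main inner product computation
  have hmain : ⟪σ.circumcenter - cF, u⟫ = w i * ‖u‖ ^ 2 := by
    have hcomb := Finset.univ.affineCombination_eq_weightedVSubOfPoint_vadd_of_sum_eq_one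
      w σ.points hw cF
    have : σ.circumcenter - cF = ∑ j, w j • (σ.points j - cF) := by
      rw [hc, hcomb]
      simp [Finset.weightedVSubOfPoint_apply, vsub_eq_sub, vadd_eq_add]
    rw [this, sum_inner]
    rw [Finset.sum_eq_single_of_mem i (Finset.mem_univ i)]
    · rw [real_inner_smul_left, hkey]
    · intro j _ hj
      rw [real_inner_smul_left, hinner0 _ _ (hpt_mem j hj) hcF_mem, mul_zero]
  have hsd : σ.signedDist i = w i * ‖u‖ := by
    show ⟪σ.circumcenter - cF, u⟫ / ‖u‖ = w i * ‖u‖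
    rw [hmain]; field_simp
  refine ⟨hsd, ?_, hu_pos⟩
  -- the bound ‖u‖ ≤ R + signedDist
  have h1 : ⟪σ.points i - σ.circumcenter, u⟫ ≤ σ.circumradius * ‖u‖ := by
    calc ⟪σ.points i - σ.circumcenter, u⟫ ≤ ‖σ.points i - σ.circumcenter‖ * ‖u‖ := real_inner_le_norm _ _
      _ = σ.circumradius * ‖u‖ := by
          rw [← dist_eq_norm, σ.dist_circumcenter_eq_circumradius i]
  have h2 : ⟪σ.circumcenter - cF, u⟫ = σ.signedDist i * ‖u‖ := by
    rw [hmain, hsd]; ring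
  have h3 : ‖u‖ ^ 2 ≤ (σ.circumradius + σ.signedDist i) * ‖u‖ := by
    have : σ.points i - cF = (σ.points i - σ.circumcenter) + (σ.circumcenter - cF) := by abel
    rw [this, inner_add_left, h2] at hkey
    nlinarith [hkey, h1]
  nlinarith [h3, hu_pos]

/-- For `k ≥ 1/(n+1)`, the quantity
`fₙ(σ) = max_i |h(vᵢ, σ)/R(σ) − k|` is bounded below by `k − 1/(n+1)`
(the value attained by a regular `(n+1)`-simplex) for every `(n+1)`-simplex `σ`. -/
theorem regular_simplex_minimizes_f {n : ℕ} (k : ℝ) (hk : 1 / (n + 1 : ℝ) ≤ k)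
    (σ : Affine.Simplex ℝ E (n + 1)) :
    k - 1 / (n + 1 : ℝ) ≤
      Finset.univ.sup' Finset.univ_nonempty
        (fun i : Fin (n + 2) => |σ.signedDist i / σ.circumradius - k|) := by
  by_contra hcon
  push_neg at hcon
  have hn1 : (0:ℝ) < (n:ℝ) + 1 := by positivity
  have hn2 : (0:ℝ) < (n:ℝ) + 2 := by positivity
  have hlt : ∀ i : Fin (n + 2), |σ.signedDist i / σ.circumradius - k| < k - 1 / (n + 1 : ℝ) :=
    fun i => lt_of_le_of_lt (Finset.le_sup'
      (fun i : Fin (n + 2) => |σ.signedDist i / σ.circumradius - k|) (Finset.mem_univ i)) hcon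
  have hR : 0 < σ.circumradius := σ.circumradius_pos
  obtain ⟨w, hw, hc⟩ := eq_affineCombination_of_mem_affineSpan_of_fintype
    σ.circumcenter_mem_affineSpan
  -- each w i > 1/(n+2)
  have hwlt : ∀ i : Fin (n + 2), 1 / ((n:ℝ) + 2) < w i := by
    intro i
    obtain ⟨hsd, hub, hupos⟩ := aux σ i w hw hc
    -- signedDist i > R/(n+1)
    have h1 : 1 / ((n:ℝ) + 1) < σ.signedDist i / σ.circumradius := by
      have := (abs_lt.mp (hlt i)).1
      linarith
    have hhi : σ.circumradius / ((n:ℝ) + 1) < σ.signedDist i := by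
      rw [lt_div_iff₀ hR] at h1
      rw [div_lt_iff₀ hn1]
      have hinv : 1 / ((n:ℝ) + 1) * ((n:ℝ) + 1) = 1 := by field_simp
      nlinarith [h1, hinv, hn1, hR]
    have hhpos : 0 < σ.signedDist i := lt_trans (by positivity) hhi
    -- ‖u‖ < (n+2) * signedDist i
    have hub2 : ‖σ.points i - (((σ.facetOpp i).orthogonalProjectionSpan (σ.points i) : E))‖
        < ((n:ℝ) + 2) * σ.signedDist i := by
      have : σ.circumradius < ((n:ℝ) + 1) * σ.signedDist i := by
        rw [div_lt_iff₀ hn1] at hhi; linarith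
      calc _ ≤ σ.circumradius + σ.signedDist i := hub
        _ < ((n:ℝ) + 1) * σ.signedDist i + σ.signedDist i := by linarith
        _ = ((n:ℝ) + 2) * σ.signedDist i := by ring
    -- conclude
    rw [div_lt_iff₀ hn2]
    have : w i * ‖σ.points i - (((σ.facetOpp i).orthogonalProjectionSpan (σ.points i) : E))‖
        = σ.signedDist i := hsd.symm
    nlinarith [hub2, hupos, this]
  -- contradiction with ∑ w = 1
  have hsum : (1:ℝ) < ∑ j : Fin (n + 2), w j := by
    calc (1:ℝ) = ∑ _j : Fin (n + 2), 1 / ((n:ℝ) + 2) := by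
          rw [Finset.sum_const, Finset.card_univ, Fintype.card_fin, nsmul_eq_mul]
          push_cast; field_simp
      _ < ∑ j, w j := Finset.sum_lt_sum_of_nonempty Finset.univ_nonempty
          (fun j _ => hwlt j)
  rw [hw] at hsum
  exact lt_irrefl _ hsum
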